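/- Let S and A be finite types and consider two Markov decision processes on S and A with a common initial distribution ρ₀, transition kernels T¹, T² : S × A → PMF(S), and policies π¹, π² : S → PMF(A). Suppose D_TV(T¹(s,a), T²(s,a)) ≤ ε_T for all s, a and D_TV(π¹(s), π²(s)) ≤ ε_π for all s. Let r : S × A → ℝ satisfy |r(s,a)| ≤ R for all s, a, let γ ∈ [0,1), and let G¹(π¹) and G²(π²) denote the discounted returns of π¹ under T¹ and of π² under T², respectively. Then |G¹(π¹) − G²(π²)| ≤ 2Rγ(ε_π + ε_T)/(1 − γ)² + 2Rε_π/(1 − γ). -/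

import Mathlib

open scoped BigOperators

/-- Total variation distance between two PMFs on a finite type. -/
noncomputable def tv {X : Type*} [Fintype X] (p q : PMF X) : ℝ :=
  (1 / 2) * ∑ x, |(p x).toReal - (q x).toReal|

lemma tv_nonneg' {X : Type*} [Fintype X] (p q : PMF X) : 0 ≤ tv p q := by
  unfold tv; positivity

lemma sum_toReal_eq_one' {X : Type*} [Fintype X] (p : PMF X) :
    ∑ x, (p x).toReal = 1 := by
  have h := p.tsum_coe
  rw [tsum_fintype] at h
  rw [← ENNReal.toReal_sum (fun a _ => PMF.apply_ne_top p a), h, ENNReal.toReal_one]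

lemma abs_mul_sub_mul' (a b c d : ℝ) (hb : 0 ≤ b) (hc : 0 ≤ c) :
    |a * b - c * d| ≤ |a - c| * b + c * |b - d| := by
  have h : a * b - c * d = (a - c) * b + c * (b - d) := by ring
  rw [h]
  refine (abs_add_le _ _).trans ?_
  rw [abs_mul, abs_mul, abs_of_nonneg hb, abs_of_nonneg hc]

/-- Lemma 3 of the paper: For two MDPs with a common initial distribution,
transition kernels `ε_T`-close and policies `ε_π`-close in total variation, a reward
bounded by `R`, and discount `γ ∈ [0,1)`, the discounted returns satisfy
`|G¹(π¹) − G²(π²)| ≤ 2Rγ(ε_π + ε_T)/(1−γ)² + 2Rε_π/(1−γ)`. -/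
theorem return_gap_two_mdps {S A : Type*} [Fintype S] [Fintype A]
    (ρ₀ : PMF S) (T₁ T₂ : S × A → PMF S) (π₁ π₂ : S → PMF A) (εT επ : ℝ)
    (hT : ∀ s a, tv (T₁ (s, a)) (T₂ (s, a)) ≤ εT)
    (hπ : ∀ s, tv (π₁ s) (π₂ s) ≤ επ)
    (μ₁ μ₂ : ℕ → PMF S)
    (hμ₁0 : μ₁ 0 = ρ₀) (hμ₂0 : μ₂ 0 = ρ₀)
    (hμ₁ : ∀ t s', μ₁ (t + 1) s' = ∑ s, ∑ a, μ₁ t s * π₁ s a * T₁ (s, a) s')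
    (hμ₂ : ∀ t s', μ₂ (t + 1) s' = ∑ s, ∑ a, μ₂ t s * π₂ s a * T₂ (s, a) s')
    (p₁ p₂ : ℕ → PMF (S × A))
    (hp₁ : ∀ t s a, p₁ t (s, a) = μ₁ t s * π₁ s a)
    (hp₂ : ∀ t s a, p₂ t (s, a) = μ₂ t s * π₂ s a)
    (r : S × A → ℝ) (R : ℝ) (hr : ∀ s a, |r (s, a)| ≤ R)
    (γ : ℝ) (hγ0 : 0 ≤ γ) (hγ1 : γ < 1)
    (G₁ G₂ : ℝ)
    (hG₁ : G₁ = ∑' t : ℕ, γ ^ t * ∑ sa : S × A, (p₁ t sa).toReal * r sa)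
    (hG₂ : G₂ = ∑' t : ℕ, γ ^ t * ∑ sa : S × A, (p₂ t sa).toReal * r sa) :
    |G₁ - G₂| ≤ 2 * R * γ * (επ + εT) / (1 - γ) ^ 2 + 2 * R * επ / (1 - γ) := by
  classical
  -- nonemptiness and nonnegativity
  have hSne : Nonempty S := by
    by_contra h
    rw [not_nonempty_iff] at h
    have h1 := ρ₀.tsum_coe
    rw [tsum_empty] at h1
    exact one_ne_zero h1.symm
  have hAne : Nonempty A := by
    by_contra h
    rw [not_nonempty_iff] at h
    have h1 := (π₁ (Classical.arbitrary S)).tsum_coe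
    rw [tsum_empty] at h1
    exact one_ne_zero h1.symm
  obtain ⟨s₀⟩ := hSne
  obtain ⟨a₀⟩ := hAne
  have hεπ : 0 ≤ επ := le_trans (tv_nonneg' _ _) (hπ s₀)
  have hεT : 0 ≤ εT := le_trans (tv_nonneg' _ _) (hT s₀ a₀)
  have hR : 0 ≤ R := le_trans (abs_nonneg _) (hr s₀ a₀)
  have h1γ : (0:ℝ) < 1 - γ := by linarith
  -- Step 1 : tv (p₁ t) (p₂ t) ≤ tv (μ₁ t) (μ₂ t) + επ
  have hstep1 : ∀ t, tv (p₁ t) (p₂ t) ≤ tv (μ₁ t) (μ₂ t) + επ := by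
    intro t
    have key : ∑ sa : S × A, |(p₁ t sa).toReal - (p₂ t sa).toReal|
        ≤ (∑ s, |(μ₁ t s).toReal - (μ₂ t s).toReal|) + 2 * επ := by
      rw [Fintype.sum_prod_type]
      have hb : ∀ s : S, ∑ a, |(p₁ t (s, a)).toReal - (p₂ t (s, a)).toReal|
          ≤ |(μ₁ t s).toReal - (μ₂ t s).toReal| + (μ₂ t s).toReal * (2 * επ) := by
        intro s
        have h1 : ∀ a, |(p₁ t (s, a)).toReal - (p₂ t (s, a)).toReal|
            ≤ |(μ₁ t s).toReal - (μ₂ t s).toReal| * (π₁ s a).toReal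
              + (μ₂ t s).toReal * |(π₁ s a).toReal - (π₂ s a).toReal| := by
          intro a
          rw [hp₁, hp₂, ENNReal.toReal_mul, ENNReal.toReal_mul]
          exact abs_mul_sub_mul' _ _ _ _ ENNReal.toReal_nonneg ENNReal.toReal_nonneg
        calc ∑ a, |(p₁ t (s, a)).toReal - (p₂ t (s, a)).toReal|
            ≤ ∑ a, (|(μ₁ t s).toReal - (μ₂ t s).toReal| * (π₁ s a).toReal
              + (μ₂ t s).toReal * |(π₁ s a).toReal - (π₂ s a).toReal|) :=
              Finset.sum_le_sum (fun a _ => h1 a)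
          _ = |(μ₁ t s).toReal - (μ₂ t s).toReal| * (∑ a, (π₁ s a).toReal)
              + (μ₂ t s).toReal * ∑ a, |(π₁ s a).toReal - (π₂ s a).toReal| := by
              rw [Finset.sum_add_distrib, ← Finset.mul_sum, ← Finset.mul_sum]
          _ = |(μ₁ t s).toReal - (μ₂ t s).toReal|
              + (μ₂ t s).toReal * (2 * tv (π₁ s) (π₂ s)) := by
              rw [sum_toReal_eq_one', mul_one]
              congr 1
              unfold tv; ring
          _ ≤ |(μ₁ t s).toReal - (μ₂ t s).toReal| + (μ₂ t s).toReal * (2 * επ) :=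
              add_le_add_right (mul_le_mul_of_nonneg_left (by linarith [hπ s])
                ENNReal.toReal_nonneg) _
      calc ∑ s, ∑ a, |(p₁ t (s, a)).toReal - (p₂ t (s, a)).toReal|
          ≤ ∑ s, (|(μ₁ t s).toReal - (μ₂ t s).toReal| + (μ₂ t s).toReal * (2 * επ)) :=
            Finset.sum_le_sum (fun s _ => hb s)
        _ = (∑ s, |(μ₁ t s).toReal - (μ₂ t s).toReal|) + (∑ s, (μ₂ t s).toReal) * (2 * επ) := by
            rw [Finset.sum_add_distrib, ← Finset.sum_mul]
        _ = (∑ s, |(μ₁ t s).toReal - (μ₂ t s).toReal|) + 2 * επ := by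
            rw [sum_toReal_eq_one', one_mul]
    unfold tv at *
    linarith
  -- toReal recursion formulas
  have hterm_ne : ∀ (x y z : ENNReal), x ≠ ⊤ → y ≠ ⊤ → z ≠ ⊤ → x * y * z ≠ ⊤ :=
    fun x y z hx hy hz => ENNReal.mul_ne_top (ENNReal.mul_ne_top hx hy) hz
  have hμR : ∀ (μ : ℕ → PMF S) (π : S → PMF A) (T : S × A → PMF S) (p : ℕ → PMF (S × A)),
      (∀ t s', μ (t + 1) s' = ∑ s, ∑ a, μ t s * π s a * T (s, a) s') →
      (∀ t s a, p t (s, a) = μ t s * π s a) →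
      ∀ t s', (μ (t + 1) s').toReal
        = ∑ s, ∑ a, (p t (s, a)).toReal * (T (s, a) s').toReal := by
    intro μ π T p hrec hp t s'
    rw [hrec t s']
    rw [ENNReal.toReal_sum (fun s _ => ?_)]
    · refine Finset.sum_congr rfl (fun s _ => ?_)
      rw [ENNReal.toReal_sum (fun a _ => hterm_ne _ _ _ (PMF.apply_ne_top _ _)
        (PMF.apply_ne_top _ _) (PMF.apply_ne_top _ _))]
      refine Finset.sum_congr rfl (fun a _ => ?_)
      rw [hp, ENNReal.toReal_mul, ENNReal.toReal_mul]
    · exact (ENNReal.sum_lt_top.mpr (fun a _ => lt_top_iff_ne_top.mpr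
        (hterm_ne _ _ _ (PMF.apply_ne_top _ _) (PMF.apply_ne_top _ _)
          (PMF.apply_ne_top _ _)))).ne
  have hμ₁R := hμR μ₁ π₁ T₁ p₁ hμ₁ hp₁
  have hμ₂R := hμR μ₂ π₂ T₂ p₂ hμ₂ hp₂
  -- Step 2 : tv (μ₁ (t+1)) (μ₂ (t+1)) ≤ tv (p₁ t) (p₂ t) + εT
  have hstep2 : ∀ t, tv (μ₁ (t + 1)) (μ₂ (t + 1)) ≤ tv (p₁ t) (p₂ t) + εT := by
    intro t
    have h1 : ∀ s', |(μ₁ (t + 1) s').toReal - (μ₂ (t + 1) s').toReal|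
        ≤ ∑ s, ∑ a, (|(p₁ t (s, a)).toReal - (p₂ t (s, a)).toReal| * (T₁ (s, a) s').toReal
          + (p₂ t (s, a)).toReal * |(T₁ (s, a) s').toReal - (T₂ (s, a) s').toReal|) := by
      intro s'
      rw [hμ₁R t s', hμ₂R t s', ← Finset.sum_sub_distrib]
      refine (Finset.abs_sum_le_sum_abs _ _).trans (Finset.sum_le_sum (fun s _ => ?_))
      rw [← Finset.sum_sub_distrib]
      refine (Finset.abs_sum_le_sum_abs _ _).trans (Finset.sum_le_sum (fun a _ => ?_))
      exact abs_mul_sub_mul' _ _ _ _ ENNReal.toReal_nonneg ENNReal.toReal_nonneg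
    have key : ∑ s', |(μ₁ (t + 1) s').toReal - (μ₂ (t + 1) s').toReal|
        ≤ (∑ sa : S × A, |(p₁ t sa).toReal - (p₂ t sa).toReal|) + 2 * εT := by
      calc ∑ s', |(μ₁ (t + 1) s').toReal - (μ₂ (t + 1) s').toReal|
          ≤ ∑ s', ∑ s, ∑ a,
            (|(p₁ t (s, a)).toReal - (p₂ t (s, a)).toReal| * (T₁ (s, a) s').toReal
            + (p₂ t (s, a)).toReal * |(T₁ (s, a) s').toReal - (T₂ (s, a) s').toReal|) :=
            Finset.sum_le_sum (fun s' _ => h1 s')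
        _ = ∑ s, ∑ a, ∑ s',
            (|(p₁ t (s, a)).toReal - (p₂ t (s, a)).toReal| * (T₁ (s, a) s').toReal
            + (p₂ t (s, a)).toReal * |(T₁ (s, a) s').toReal - (T₂ (s, a) s').toReal|) := by
            rw [Finset.sum_comm]
            exact Finset.sum_congr rfl (fun s _ => Finset.sum_comm)
        _ = ∑ s, ∑ a,
            (|(p₁ t (s, a)).toReal - (p₂ t (s, a)).toReal|
            + (p₂ t (s, a)).toReal * (2 * tv (T₁ (s, a)) (T₂ (s, a)))) := by
            refine Finset.sum_congr rfl (fun s _ => Finset.sum_congr rfl (fun a _ => ?_))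
            rw [Finset.sum_add_distrib, ← Finset.mul_sum, ← Finset.mul_sum,
              sum_toReal_eq_one', mul_one]
            congr 1
            unfold tv; ring
        _ ≤ ∑ s, ∑ a,
            (|(p₁ t (s, a)).toReal - (p₂ t (s, a)).toReal|
            + (p₂ t (s, a)).toReal * (2 * εT)) := by
            refine Finset.sum_le_sum (fun s _ => Finset.sum_le_sum (fun a _ => ?_))
            exact add_le_add_right (mul_le_mul_of_nonneg_left (by linarith [hT s a])
              ENNReal.toReal_nonneg) _
        _ = (∑ sa : S × A, |(p₁ t sa).toReal - (p₂ t sa).toReal|)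
            + (∑ sa : S × A, (p₂ t sa).toReal) * (2 * εT) := by
            rw [Fintype.sum_prod_type, Fintype.sum_prod_type]
            simp only [Finset.sum_add_distrib, Finset.sum_mul]
        _ = (∑ sa : S × A, |(p₁ t sa).toReal - (p₂ t sa).toReal|) + 2 * εT := by
            rw [sum_toReal_eq_one', one_mul]
    unfold tv at *
    linarith
  -- Step 3 : marginal distance bound by induction
  have hD : ∀ t, tv (μ₁ t) (μ₂ t) ≤ t * (επ + εT) := by
    intro t
    induction t with
    | zero => simp [tv, hμ₁0, hμ₂0]
    | succ n ih =>
      have h2 := hstep2 n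
      have h3 := hstep1 n
      push_cast
      nlinarith
  have hd : ∀ t, tv (p₁ t) (p₂ t) ≤ t * (επ + εT) + επ := by
    intro t
    have := hstep1 t
    have := hD t
    linarith
  -- Step 4 : per-step reward gap
  set f₁ : ℕ → ℝ := fun t => ∑ sa : S × A, (p₁ t sa).toReal * r sa with hf₁
  set f₂ : ℕ → ℝ := fun t => ∑ sa : S × A, (p₂ t sa).toReal * r sa with hf₂
  have hfbound : ∀ (p : ℕ → PMF (S × A)) t, |∑ sa : S × A, (p t sa).toReal * r sa| ≤ R := by
    intro p t
    refine (Finset.abs_sum_le_sum_abs _ _).trans ?_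
    calc ∑ sa : S × A, |(p t sa).toReal * r sa|
        ≤ ∑ sa : S × A, (p t sa).toReal * R := by
          refine Finset.sum_le_sum (fun sa _ => ?_)
          rw [abs_mul, abs_of_nonneg ENNReal.toReal_nonneg]
          exact mul_le_mul_of_nonneg_left (hr sa.1 sa.2) ENNReal.toReal_nonneg
      _ = R := by rw [← Finset.sum_mul, sum_toReal_eq_one', one_mul]
  have hdiff : ∀ t, |f₁ t - f₂ t| ≤ 2 * R * (t * (επ + εT) + επ) := by
    intro t
    have h1 : |f₁ t - f₂ t| ≤ 2 * R * tv (p₁ t) (p₂ t) := by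
      rw [hf₁, hf₂]
      simp only
      rw [← Finset.sum_sub_distrib]
      refine (Finset.abs_sum_le_sum_abs _ _).trans ?_
      calc ∑ sa : S × A, |(p₁ t sa).toReal * r sa - (p₂ t sa).toReal * r sa|
          ≤ ∑ sa : S × A, |(p₁ t sa).toReal - (p₂ t sa).toReal| * R := by
            refine Finset.sum_le_sum (fun sa _ => ?_)
            rw [← sub_mul, abs_mul]
            exact mul_le_mul_of_nonneg_left (hr sa.1 sa.2) (abs_nonneg _)
        _ = (∑ sa : S × A, |(p₁ t sa).toReal - (p₂ t sa).toReal|) * R := by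
            rw [Finset.sum_mul]
        _ = 2 * R * tv (p₁ t) (p₂ t) := by unfold tv; ring
    refine h1.trans ?_
    have := hd t
    nlinarith [tv_nonneg' (p₁ t) (p₂ t)]
  -- Step 5 : summability
  have hγnorm : ‖γ‖ < 1 := by rwa [Real.norm_eq_abs, abs_of_nonneg hγ0]
  have hsumγ : Summable fun t : ℕ => γ ^ t := summable_geometric_of_lt_one hγ0 hγ1
  have hsumtγ : Summable fun t : ℕ => (t : ℝ) * γ ^ t := by
    have := summable_pow_mul_geometric_of_norm_lt_one 1 hγnorm (R := ℝ)
    simpa using this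
  have hsummand : ∀ (f : ℕ → ℝ), (∀ t, |f t| ≤ R) → Summable fun t : ℕ => γ ^ t * f t := by
    intro f hf
    refine Summable.of_norm_bounded (hsumγ.mul_right R) (fun t => ?_)
    rw [norm_mul, norm_pow, Real.norm_eq_abs, Real.norm_eq_abs, abs_of_nonneg hγ0]
    exact mul_le_mul_of_nonneg_left (hf t) (pow_nonneg hγ0 t)
  have hs₁ : Summable fun t : ℕ => γ ^ t * f₁ t := hsummand f₁ (hfbound p₁)
  have hs₂ : Summable fun t : ℕ => γ ^ t * f₂ t := hsummand f₂ (hfbound p₂)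
  have hsB : Summable fun t : ℕ => γ ^ t * (2 * R * ((t : ℝ) * (επ + εT) + επ)) := by
    have h1 : (fun t : ℕ => γ ^ t * (2 * R * ((t : ℝ) * (επ + εT) + επ)))
        = fun t : ℕ => (2 * R * (επ + εT)) * ((t : ℝ) * γ ^ t) + (2 * R * επ) * γ ^ t := by
      funext t; ring
    rw [h1]
    exact (hsumtγ.mul_left _).add (hsumγ.mul_left _)
  -- Step 6 : assemble
  have hGsub : G₁ - G₂ = ∑' t : ℕ, (γ ^ t * f₁ t - γ ^ t * f₂ t) := by
    rw [hG₁, hG₂, Summable.tsum_sub hs₁ hs₂]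
  have habs : |G₁ - G₂| ≤ ∑' t : ℕ, γ ^ t * (2 * R * ((t : ℝ) * (επ + εT) + επ)) := by
    rw [hGsub]
    have h2 : Summable fun t : ℕ => ‖γ ^ t * f₁ t - γ ^ t * f₂ t‖ := (hs₁.sub hs₂).abs
    refine (norm_tsum_le_tsum_norm h2).trans ?_
    refine Summable.tsum_le_tsum (fun t => ?_) h2 hsB
    rw [← mul_sub, Real.norm_eq_abs, abs_mul, abs_pow, abs_of_nonneg hγ0]
    exact mul_le_mul_of_nonneg_left (hdiff t) (pow_nonneg hγ0 t)
  refine habs.trans ?_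
  have heval : ∑' t : ℕ, γ ^ t * (2 * R * ((t : ℝ) * (επ + εT) + επ))
      = 2 * R * (επ + εT) * (γ / (1 - γ) ^ 2) + 2 * R * επ * (1 - γ)⁻¹ := by
    have h1 : ∑' n : ℕ, (n : ℝ) * γ ^ n = γ / (1 - γ) ^ 2 :=
      tsum_coe_mul_geometric_of_norm_lt_one hγnorm
    have h2 : ∑' n : ℕ, γ ^ n = (1 - γ)⁻¹ := tsum_geometric_of_lt_one hγ0 hγ1
    calc ∑' t : ℕ, γ ^ t * (2 * R * ((t : ℝ) * (επ + εT) + επ))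
        = ∑' t : ℕ, ((2 * R * (επ + εT)) * ((t : ℝ) * γ ^ t) + (2 * R * επ) * γ ^ t) := by
          refine tsum_congr (fun t => ?_); ring
      _ = (2 * R * (επ + εT)) * ∑' t : ℕ, (t : ℝ) * γ ^ t
          + (2 * R * επ) * ∑' t : ℕ, γ ^ t := by
          rw [Summable.tsum_add (hsumtγ.mul_left _) (hsumγ.mul_left _), tsum_mul_left, tsum_mul_left]
      _ = _ := by rw [h1, h2]
  rw [heval]
  have hne : (1 - γ) ≠ 0 := ne_of_gt h1γ
  apply le_of_eq
  ring
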